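/- Let T be a tree on {1,...,n} with an ascending labeling and let V' be a nonempty subset of vertices. Then the vertex of maximum label in V' is either an isolated vertex or a pendant of the induced subgraph T[V']. -/

import Mathlib

/-- Let `T` be a tree on `{0,...,n-1}` whose identity labeling is ascending
(every vertex with nonzero label has a unique neighbor of smaller label).  For any
nonempty set `V'` of vertices, the vertex of maximum label in `V'` is either isolated in
the induced subgraph `T[V']` (no neighbors in `V'`) or a pendant of `T[V']`
(exactly one neighbor in `V'`). -/
theorem tree_max_vertex_pendant_or_isolated {n : ℕ} (G : SimpleGraph (Fin n))
    (hT : G.IsTree)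
    (hasc : ∀ k : Fin n, k.val ≠ 0 → ∃! j : Fin n, j < k ∧ G.Adj j k)
    (V' : Finset (Fin n)) (hne : V'.Nonempty) :
    (∀ u ∈ V', ¬ G.Adj u (V'.max' hne)) ∨
    (∃! u : Fin n, u ∈ V' ∧ G.Adj u (V'.max' hne)) := by
  set m := V'.max' hne with hm
  by_cases h : ∃ u ∈ V', G.Adj u m
  · right
    obtain ⟨u, hu, hadj⟩ := h
    have hlt : u < m := lt_of_le_of_ne (V'.le_max' u hu)
      (fun e => G.loopless.irrefl m (e ▸ hadj))
    have hm0 : m.val ≠ 0 := by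
      have : u.val < m.val := hlt
      omega
    obtain ⟨j, _, huniq⟩ := hasc m hm0
    refine ⟨u, ⟨hu, hadj⟩, ?_⟩
    rintro y ⟨hy, hyadj⟩
    have hylt : y < m := lt_of_le_of_ne (V'.le_max' y hy)
      (fun e => G.loopless.irrefl m (e ▸ hyadj))
    rw [huniq y ⟨hylt, hyadj⟩, huniq u ⟨hlt, hadj⟩]
  · left
    push_neg at h
    exact h
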